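/- If H is a minor of a finite simple graph G, then xc(COR(H)) ≤ xc(COR(G)). -/

import Mathlib

open Set

noncomputable section

/-- A polytope in `ℝ^ι`: the convex hull of a finite set of points. -/
def IsPolytope {ι : Type*} (P : Set (ι → ℝ)) : Prop :=
  ∃ S : Finset (ι → ℝ), P = convexHull ℝ (S : Set (ι → ℝ))

/-- `F` is a face of `P`: the set of points of `P` maximizing some linear functional. -/
def IsFace {ι : Type*} (P F : Set (ι → ℝ)) : Prop :=
  ∃ (f : (ι → ℝ) →ₗ[ℝ] ℝ) (c : ℝ), (∀ x ∈ P, f x ≤ c) ∧ F = {x ∈ P | f x = c}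

/-- The dimension of a polytope: the dimension of (the direction of) its affine hull. -/
def polyDim {ι : Type*} (P : Set (ι → ℝ)) : ℕ :=
  Module.finrank ℝ (vectorSpan ℝ P)

/-- A facet of a polytope: a proper face of codimension 1. -/
def IsFacet {ι : Type*} (P F : Set (ι → ℝ)) : Prop :=
  IsFace P F ∧ F ≠ P ∧ polyDim F + 1 = polyDim P

/-- The number of facets of a polytope. -/
def facetCount {ι : Type*} (P : Set (ι → ℝ)) : ℕ :=
  Nat.card {F : Set (ι → ℝ) // IsFacet P F}

/-- `Q ⊆ ℝ^p` is an extension of `P`: a polytope mapping onto `P` under an affine map. -/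
def IsExtensionOf {p : ℕ} {ι : Type*} (Q : Set (Fin p → ℝ)) (P : Set (ι → ℝ)) : Prop :=
  IsPolytope Q ∧ ∃ π : (Fin p → ℝ) →ᵃ[ℝ] (ι → ℝ), π '' Q = P

/-- The extension complexity of `P`: the minimum number of facets of an extension of `P`. -/
def xc {ι : Type*} (P : Set (ι → ℝ)) : ℕ :=
  sInf { m | ∃ (p : ℕ) (Q : Set (Fin p → ℝ)), IsExtensionOf Q P ∧ facetCount Q = m }

open scoped Classical in
/-- The correlation polytope of a graph `G = (V,E)`: the convex hull in `ℝ^{V ∪ E}` of the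
vectors `(χ(X), χ(E(X)))` over all vertex subsets `X ⊆ V`. -/
def corPolytope {V : Type*} (G : SimpleGraph V) : Set ((V ⊕ ↥G.edgeSet) → ℝ) :=
  convexHull ℝ {x | ∃ X : Set V,
    (∀ v : V, x (Sum.inl v) = if v ∈ X then 1 else 0) ∧
    (∀ e : G.edgeSet, x (Sum.inr e) = if ∀ v ∈ (e : Sym2 V), v ∈ X then 1 else 0)}

/-- `H` is a minor of `G`: there are pairwise disjoint connected branch sets in `G`,
one for each vertex of `H`, with an edge of `G` between the branch sets of any two
vertices adjacent in `H`. -/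
def SimpleGraph.IsMinorOf {W V : Type*} (H : SimpleGraph W) (G : SimpleGraph V) : Prop :=
  ∃ B : W → Set V,
    (∀ w, (G.induce (B w)).Connected) ∧
    (Pairwise fun w w' => Disjoint (B w) (B w')) ∧
    (∀ ⦃w w'⦄, H.Adj w w' → ∃ u ∈ B w, ∃ v ∈ B w', G.Adj u v)

/-- A tree-decomposition of a graph `G`. -/
structure TreeDecomp {V : Type*} (G : SimpleGraph V) where
  ι : Type
  finite : Finite ι
  T : SimpleGraph ι
  isTree : T.IsTree
  B : ι → Set V
  bag_finite : ∀ t, (B t).Finite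
  vertex_cover : ∀ v : V, ∃ t, v ∈ B t
  edge_cover : ∀ ⦃u v : V⦄, G.Adj u v → ∃ t, u ∈ B t ∧ v ∈ B t
  subtree : ∀ v : V, (T.induce {t | v ∈ B t}).Connected

/-- The width of a tree-decomposition: `max |B_t| - 1`. -/
def TreeDecomp.width {V : Type*} {G : SimpleGraph V} (D : TreeDecomp G) : ℕ :=
  (⨆ t, (D.B t).ncard) - 1

/-- The treewidth of a graph: minimum width of a tree-decomposition. -/
def treewidth {V : Type*} (G : SimpleGraph V) : ℕ :=
  sInf { w | ∃ D : TreeDecomp G, D.width = w }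

/-- The `t × t` grid graph: `(a,b)` adjacent to `(a',b')` iff `|a-a'| + |b-b'| = 1`. -/
def gridGraph (t : ℕ) : SimpleGraph (Fin t × Fin t) where
  Adj p q := ((p.1 : ℤ) - (q.1 : ℤ)).natAbs + ((p.2 : ℤ) - (q.2 : ℤ)).natAbs = 1
  symm := by constructor; intro p q h; omega
  loopless := by constructor; intro p h; omega

/-- The graph `G'` obtained from `G` by adding, for each edge `e = uv`, a new vertex
adjacent exactly to `u` and `v` (keeping all edges of `G`). -/
def addEdgeVertices {V : Type*} (G : SimpleGraph V) : SimpleGraph (V ⊕ ↥G.edgeSet) where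
  Adj a b :=
    match a, b with
    | Sum.inl u, Sum.inl v => G.Adj u v
    | Sum.inl u, Sum.inr e => u ∈ (e : Sym2 V)
    | Sum.inr e, Sum.inl u => u ∈ (e : Sym2 V)
    | Sum.inr _, Sum.inr _ => False
  symm := by
    constructor
    rintro (u | e) (v | f) h
    · exact h.symm
    · exact h
    · exact h
    · exact h
  loopless := by
    constructor
    rintro (u | e) h
    · exact G.loopless.irrefl u h
    · exact h

/-- The graph `G / uv` obtained from `G` by contracting the edge `uv`
(the vertex `v` is merged into `u`). -/
def contractEdge {V : Type*} (G : SimpleGraph V) (u v : V) :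
    SimpleGraph {w : V // w ≠ v} where
  Adj a b := a ≠ b ∧
    (G.Adj a.1 b.1 ∨ (a.1 = u ∧ G.Adj v b.1) ∨ (b.1 = u ∧ G.Adj a.1 v))
  symm := by
    constructor
    rintro a b ⟨hne, h⟩
    refine ⟨hne.symm, ?_⟩
    rcases h with h | ⟨h1, h2⟩ | ⟨h1, h2⟩
    · exact Or.inl h.symm
    · exact Or.inr (Or.inr ⟨h1, h2.symm⟩)
    · exact Or.inr (Or.inl ⟨h1, h2.symm⟩)
  loopless := by constructor; rintro a ⟨hne, _⟩; exact hne rfl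

lemma deleteEdges_edgeSet_subset {V : Type*} (G : SimpleGraph V) (s : Set (Sym2 V)) :
    (G.deleteEdges s).edgeSet ⊆ G.edgeSet := by
  rw [SimpleGraph.edgeSet_deleteEdges]
  exact Set.sdiff_subset

lemma induce_edge_mem {V : Type*} (G : SimpleGraph V) (s : Set V) (e : Sym2 ↥s)
    (he : e ∈ (G.induce s).edgeSet) : Sym2.map Subtype.val e ∈ G.edgeSet := by
  induction e using Sym2.ind with
  | _ a b => simpa using he


set_option maxHeartbeats 1000000
set_option linter.unusedSectionVars false
set_option linter.unusedVariables false
set_option linter.unnecessarySeqFocus false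

-- ====================== geometry development ======================

set_option linter.unusedSectionVars false
set_option linter.unusedVariables false
set_option maxHeartbeats 1000000
open scoped Classical

section Geom

variable {ι : Type*} [Fintype ι]

private lemma convex_levelLE (h : (ι → ℝ) →ₗ[ℝ] ℝ) (m : ℝ) :
    Convex ℝ {x : ι → ℝ | h x ≤ m} := by
  intro x hx y hy a b ha hb hab
  simp only [Set.mem_setOf_eq, map_add, map_smul, smul_eq_mul] at *
  have hm : a*m + b*m = m := by rw [← add_mul, hab, one_mul]
  have h1 : a * h x ≤ a * m := mul_le_mul_of_nonneg_left hx ha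
  have h2 : b * h y ≤ b * m := mul_le_mul_of_nonneg_left hy hb
  linarith

private lemma convex_levelEQ (h : (ι → ℝ) →ₗ[ℝ] ℝ) (m : ℝ) :
    Convex ℝ {x : ι → ℝ | h x = m} := by
  intro x hx y hy a b ha hb hab
  simp only [Set.mem_setOf_eq, map_add, map_smul, smul_eq_mul] at *
  rw [hx, hy, ← add_mul, hab, one_mul]

/-- bound on vertices extends to the hull -/
lemma hull_bound {S : Finset (ι → ℝ)} {h : (ι → ℝ) →ₗ[ℝ] ℝ} {m : ℝ}
    (hb : ∀ s ∈ S, h s ≤ m) :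
    ∀ x ∈ convexHull ℝ (S : Set (ι → ℝ)), h x ≤ m := by
  intro x hx
  have := convexHull_min (fun s hs => by
    obtain ⟨s', hs', rfl⟩ : ∃ s' ∈ S, s' = s := ⟨s, Finset.mem_coe.1 hs, rfl⟩
    exact hb s' hs') (convex_levelLE h m)
  exact this hx

lemma hull_subset_level {S : Finset (ι → ℝ)} {h : (ι → ℝ) →ₗ[ℝ] ℝ} {m : ℝ}
    (hb : ∀ s ∈ S, h s = m) :
    ∀ x ∈ convexHull ℝ (S : Set (ι → ℝ)), h x = m := by
  intro x hx
  have := convexHull_min (fun s hs => by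
    obtain ⟨s', hs', rfl⟩ : ∃ s' ∈ S, s' = s := ⟨s, Finset.mem_coe.1 hs, rfl⟩
    exact hb s' hs') (convex_levelEQ h m)
  exact this hx

/-- L1: an exposed face of a hull is the hull of the touching vertices. -/
lemma face_hull (S : Finset (ι → ℝ)) (h : (ι → ℝ) →ₗ[ℝ] ℝ) (m : ℝ)
    (hb : ∀ s ∈ S, h s ≤ m) :
    {x ∈ convexHull ℝ (S : Set (ι → ℝ)) | h x = m}
      = convexHull ℝ ((S.filter fun s => h s = m : Finset (ι → ℝ)) : Set (ι → ℝ)) := by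
  apply Set.Subset.antisymm
  · rintro x ⟨hxQ, hxm⟩
    rw [Finset.convexHull_eq] at hxQ
    obtain ⟨w, hw0, hw1, hwx⟩ := hxQ
    have hx' : x = ∑ s ∈ S, w s • s := by
      rw [← hwx, Finset.centerMass_eq_of_sum_1 _ _ hw1]; rfl
    have hhx : h x = ∑ s ∈ S, w s * h s := by
      rw [hx', map_sum]; congr 1; ext s; rw [map_smul]; rfl
    have hkey : ∀ s ∈ S, w s * (m - h s) = 0 := by
      rw [← Finset.sum_eq_zero_iff_of_nonneg]
      · have : ∑ s ∈ S, w s * (m - h s) = (∑ s ∈ S, w s) * m - ∑ s ∈ S, w s * h s := by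
          rw [Finset.sum_mul, ← Finset.sum_sub_distrib]; congr 1; ext s; ring
        rw [this, hw1, ← hhx, hxm]; ring
      · intro s hs
        have h1 := hw0 s hs
        have h2 := hb s hs
        nlinarith
    have himp : ∀ s ∈ S, w s ≠ 0 → h s = m := by
      intro s hs hws
      have := hkey s hs
      rcases mul_eq_zero.1 this with h' | h'
      · exact absurd h' hws
      · linarith
    have hsum1 : ∑ s ∈ S.filter (fun s => h s = m), w s = 1 := by
      rw [Finset.sum_filter_of_ne (fun s hs hws => himp s hs hws), hw1]
    have hsum2 : ∑ s ∈ S.filter (fun s => h s = m), w s • s = ∑ s ∈ S, w s • s := by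
      apply Finset.sum_filter_of_ne
      intro s hs hws
      apply himp s hs
      intro hw0'
      apply hws; rw [hw0', zero_smul]
    have : x = (S.filter (fun s => h s = m)).centerMass w id := by
      rw [Finset.centerMass_eq_of_sum_1 _ _ hsum1]
      rw [hx', ← hsum2]; rfl
    rw [this]
    exact Finset.centerMass_mem_convexHull _ (fun s hs => hw0 s (Finset.mem_of_mem_filter s hs))
      (by rw [hsum1]; norm_num) (fun s hs => hs)
  · intro x hx
    constructor
    · exact convexHull_mono (by exact_mod_cast Finset.filter_subset _ _) hx
    · exact hull_subset_level (fun s hs => (Finset.mem_filter.1 hs).2) x hx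


-- chunk2



/-- functionals kill the vectorSpan of a level set -/
lemma levelset_vectorSpan_ker {A : Set (ι → ℝ)} {h : (ι → ℝ) →ₗ[ℝ] ℝ} {m : ℝ}
    (hA : ∀ x ∈ A, h x = m) : ∀ v ∈ vectorSpan ℝ A, h v = 0 := by
  intro v hv
  have : vectorSpan ℝ A ≤ LinearMap.ker h := by
    rw [vectorSpan_def, Submodule.span_le]
    rintro z ⟨y, hy, u, hu, rfl⟩
    simp only [SetLike.mem_coe, LinearMap.mem_ker, vsub_eq_sub, map_sub]
    rw [hA y hy, hA u hu, sub_self]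
  exact this hv

/-- L2: a nonempty exposed face with full dimension is everything. -/
lemma face_eq_of_dim_le {P : Set (ι → ℝ)} {h : (ι → ℝ) →ₗ[ℝ] ℝ} {m : ℝ}
    (hb : ∀ x ∈ P, h x ≤ m)
    (hne : ({x ∈ P | h x = m}).Nonempty)
    (hd : polyDim P ≤ polyDim {x ∈ P | h x = m}) :
    {x ∈ P | h x = m} = P := by
  set A := {x ∈ P | h x = m} with hA
  have hsub : A ⊆ P := fun x hx => hx.1
  have hle : vectorSpan ℝ A ≤ vectorSpan ℝ P := vectorSpan_mono ℝ hsub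
  have heq : vectorSpan ℝ A = vectorSpan ℝ P :=
    Submodule.eq_of_le_of_finrank_le hle hd
  obtain ⟨a, haP, ham⟩ := hne
  apply Set.Subset.antisymm hsub
  intro x hxP
  refine ⟨hxP, ?_⟩
  have hxv : x - a ∈ vectorSpan ℝ P := by
    have := vsub_mem_vectorSpan ℝ hxP haP
    simpa using this
  rw [← heq] at hxv
  have h0 : h (x - a) = 0 :=
    levelset_vectorSpan_ker (fun y hy => hy.2) _ hxv
  have : h x - h a = 0 := by rw [← map_sub]; exact h0
  rw [ham] at this; linarith

/-- a proper nonempty exposed face has strictly smaller dimension -/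
lemma dim_lt_of_face_ne {P : Set (ι → ℝ)} {h : (ι → ℝ) →ₗ[ℝ] ℝ} {m : ℝ}
    (hb : ∀ x ∈ P, h x ≤ m)
    (hne : ({x ∈ P | h x = m}).Nonempty)
    (hprop : {x ∈ P | h x = m} ≠ P) :
    polyDim {x ∈ P | h x = m} < polyDim P := by
  have hsub : {x ∈ P | h x = m} ⊆ P := fun x hx => hx.1
  have hle : polyDim {x ∈ P | h x = m} ≤ polyDim P :=
    Submodule.finrank_mono (vectorSpan_mono ℝ hsub)
  rcases lt_or_eq_of_le hle with h' | h'
  · exact h'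
  · exact absurd (face_eq_of_dim_le hb hne (le_of_eq h'.symm)) hprop

lemma polyDim_mono {A B : Set (ι → ℝ)} (hsub : A ⊆ B) : polyDim A ≤ polyDim B :=
  Submodule.finrank_mono (vectorSpan_mono ℝ hsub)

/-- H0: dual functional separating a point from a submodule -/
lemma exists_dual_funct {U : Submodule ℝ (ι → ℝ)} {v : ι → ℝ} (hv : v ∉ U) :
    ∃ φ : (ι → ℝ) →ₗ[ℝ] ℝ, (∀ u ∈ U, φ u = 0) ∧ φ v = 1 := by
  have h0 : U.mkQ v ≠ 0 := by
    simpa [Submodule.mkQ_apply, Submodule.Quotient.mk_eq_zero] using hv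
  obtain ⟨ψ, hψ⟩ : ∃ ψ : Module.Dual ℝ ((ι → ℝ) ⧸ U), ψ (U.mkQ v) ≠ 0 := by
    by_contra hcon
    push_neg at hcon
    exact h0 ((Module.forall_dual_apply_eq_zero_iff ℝ _).1 hcon)
  refine ⟨(ψ (U.mkQ v))⁻¹ • (ψ.comp U.mkQ), fun u hu => ?_, ?_⟩
  · simp [Submodule.mkQ_apply, (Submodule.Quotient.mk_eq_zero U).2 hu]
  · simp only [LinearMap.smul_apply, LinearMap.coe_comp, Function.comp_apply, smul_eq_mul]
    exact inv_mul_cancel₀ (by simpa [Submodule.mkQ_apply] using hψ)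

/-- a functional constant on a set, bigger at an outside point -/
lemma exists_const_functional {T : Set (ι → ℝ)} {a : ι → ℝ} (ha : a ∈ T)
    {x : ι → ℝ} (hx : x ∉ affineSpan ℝ T) :
    ∃ (g : (ι → ℝ) →ₗ[ℝ] ℝ) (γ : ℝ), (∀ s ∈ T, g s = γ) ∧ g x = γ + 1 := by
  have hvnm : x - a ∉ (affineSpan ℝ T).direction := by
    intro hmem
    have : (x - a) +ᵥ a ∈ affineSpan ℝ T :=
      AffineSubspace.vadd_mem_of_mem_direction hmem (subset_affineSpan ℝ T ha)
    simp only [vadd_eq_add, sub_add_cancel] at this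
    exact hx this
  obtain ⟨φ, hφ0, hφ1⟩ := exists_dual_funct hvnm
  refine ⟨φ, φ a, fun s hs => ?_, ?_⟩
  · have hmem : s - a ∈ (affineSpan ℝ T).direction := by
      have := AffineSubspace.vsub_mem_direction (subset_affineSpan ℝ T hs)
        (subset_affineSpan ℝ T ha)
      simpa using this
    have := hφ0 _ hmem
    rw [map_sub] at this; linarith
  · have : φ (x - a) = 1 := hφ1
    rw [map_sub] at this; linarith

lemma vectorSpan_hull (A : Set (ι → ℝ)) :
    vectorSpan ℝ (convexHull ℝ A) = vectorSpan ℝ A := by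
  rw [← direction_affineSpan, ← direction_affineSpan ℝ A, affineSpan_convexHull]

lemma polyDim_hull (A : Set (ι → ℝ)) : polyDim (convexHull ℝ A) = polyDim A := by
  unfold polyDim; rw [vectorSpan_hull]


-- chunk3
/-- rotation step -/
lemma rotate (S : Finset (ι → ℝ)) (h g : (ι → ℝ) →ₗ[ℝ] ℝ) (m γ : ℝ)
    (hb : ∀ s ∈ S, h s ≤ m)
    (hconst : ∀ s ∈ S, h s = m → g s = γ)
    (s₀ : ι → ℝ) (h0S : s₀ ∈ S) (h0m : h s₀ ≠ m) (h0g : γ < g s₀) :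
    ∃ (t : ℝ) (s₁ : ι → ℝ), 0 < t ∧ s₁ ∈ S ∧ h s₁ ≠ m ∧
      h s₁ + t * g s₁ = m + t * γ ∧
      ∀ s ∈ S, h s + t * g s ≤ m + t * γ := by
  set T := S.filter (fun s => h s ≠ m ∧ γ < g s) with hT
  have hTne : T.Nonempty := ⟨s₀, by simp [hT, h0S, h0m, h0g]⟩
  set q : (ι → ℝ) → ℝ := fun s => (m - h s) / (g s - γ) with hq
  set t := T.inf' hTne q with ht
  have hqpos : ∀ s ∈ T, 0 < q s := by
    intro s hs
    rw [hT, Finset.mem_filter] at hs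
    have h1 : h s < m := lt_of_le_of_ne (hb s hs.1) hs.2.1
    have h2 : γ < g s := hs.2.2
    exact div_pos (by linarith) (by linarith)
  obtain ⟨s₁, hs₁T, hs₁q⟩ := T.exists_mem_eq_inf' hTne q
  have hs₁T' := hs₁T
  rw [hT, Finset.mem_filter] at hs₁T'
  obtain ⟨hs₁S, hs₁m, hs₁g⟩ := hs₁T'
  have htpos : 0 < t := by rw [ht, hs₁q]; exact hqpos _ hs₁T
  refine ⟨t, s₁, htpos, hs₁S, hs₁m, ?_, ?_⟩
  · have hne : g s₁ - γ ≠ 0 := by linarith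
    have : t * (g s₁ - γ) = m - h s₁ := by
      rw [ht, hs₁q, hq]; field_simp
    linarith [this]
  · intro s hsS
    by_cases hsm : h s = m
    · rw [hsm, hconst s hsS hsm]
    · rcases le_or_gt (g s) γ with hsg | hsg
      · have h1 : h s < m := (hb s hsS).lt_of_ne hsm
        have h2 : t * g s ≤ t * γ := mul_le_mul_of_nonneg_left hsg htpos.le
        linarith
      · have hsT : s ∈ T := by rw [hT, Finset.mem_filter]; exact ⟨hsS, hsm, hsg⟩
        have h1 : t ≤ q s := by rw [ht]; exact Finset.inf'_le _ hsT
        have h2 : t * (g s - γ) ≤ m - h s := by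
          rw [hq] at h1
          have := (le_div_iff₀ (by linarith : (0:ℝ) < g s - γ)).1 h1
          linarith [this]
        linarith

/-- (★): every proper nonempty exposed face of a polytope is contained in a facet. -/
lemma exists_facet_above (S : Finset (ι → ℝ)) :
    ∀ (k : ℕ) (h : (ι → ℝ) →ₗ[ℝ] ℝ) (m : ℝ),
      (S.filter fun s => h s ≠ m).card ≤ k →
      (∀ s ∈ S, h s ≤ m) →
      ({x ∈ convexHull ℝ (S : Set (ι → ℝ)) | h x = m}).Nonempty →
      {x ∈ convexHull ℝ (S : Set (ι → ℝ)) | h x = m} ≠ convexHull ℝ (S : Set (ι → ℝ)) →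
      ∃ (h' : (ι → ℝ) →ₗ[ℝ] ℝ) (m' : ℝ), (∀ s ∈ S, h' s ≤ m') ∧
        IsFacet (convexHull ℝ (S : Set (ι → ℝ)))
          {x ∈ convexHull ℝ (S : Set (ι → ℝ)) | h' x = m'} ∧
        {x ∈ convexHull ℝ (S : Set (ι → ℝ)) | h x = m}
          ⊆ {x ∈ convexHull ℝ (S : Set (ι → ℝ)) | h' x = m'} := by
  intro k
  induction k with
  | zero =>
      intro h m hcard hb hne hprop
      exfalso
      apply hprop
      have hall : ∀ s ∈ S, h s = m := by
        intro s hs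
        by_contra hne'
        have : s ∈ S.filter (fun s => h s ≠ m) := Finset.mem_filter.2 ⟨hs, hne'⟩
        have := Finset.card_pos.2 ⟨s, this⟩
        omega
      apply Set.Subset.antisymm (fun x hx => hx.1)
      intro x hx
      exact ⟨hx, hull_subset_level hall x hx⟩
  | succ k IH =>
      intro h m hcard hb hne hprop
      set Q := convexHull ℝ (S : Set (ι → ℝ)) with hQ
      set F := {x ∈ Q | h x = m} with hF
      by_cases hd : polyDim F + 1 = polyDim Q
      · exact ⟨h, m, hb, ⟨⟨h, m, hull_bound hb, rfl⟩, hprop, hd⟩, Set.Subset.refl _⟩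
      -- dimension facts
      have hdlt : polyDim F < polyDim Q := dim_lt_of_face_ne (hull_bound hb) hne hprop
      have hd2 : polyDim F + 2 ≤ polyDim Q := by omega
      set S₁ := S.filter (fun s => h s = m) with hS₁
      have hFS₁ : F = convexHull ℝ (S₁ : Set (ι → ℝ)) := face_hull S h m hb
      have hS₁ne : S₁.Nonempty := by
        rcases Finset.eq_empty_or_nonempty S₁ with h' | h'
        · exfalso; rw [h'] at hFS₁; simp only [Finset.coe_empty, convexHull_empty] at hFS₁
          exact hne.ne_empty hFS₁
        · exact h'
      obtain ⟨a, haS₁⟩ := hS₁ne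
      have hdimF : polyDim F = Module.finrank ℝ (vectorSpan ℝ (S₁ : Set (ι → ℝ))) := by
        rw [hFS₁, polyDim_hull]; rfl
      have hdimQ : polyDim Q = Module.finrank ℝ (vectorSpan ℝ (S : Set (ι → ℝ))) := by
        rw [hQ, polyDim_hull]; rfl
      -- find s₀ outside affine span of S₁
      have hs₀ : ∃ s₀ ∈ S, s₀ ∉ affineSpan ℝ (S₁ : Set (ι → ℝ)) := by
        by_contra hcon
        push_neg at hcon
        have hle : affineSpan ℝ (S : Set (ι → ℝ)) ≤ affineSpan ℝ (S₁ : Set (ι → ℝ)) := by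
          rw [affineSpan_le]; intro s hs
          obtain ⟨s', hs', rfl⟩ : ∃ s' ∈ S, s' = s := by simpa using hs
          exact hcon s' hs'
        have := Submodule.finrank_mono (AffineSubspace.direction_le hle)
        rw [direction_affineSpan, direction_affineSpan] at this
        omega
      obtain ⟨s₀, hs₀S, hs₀A⟩ := hs₀
      have hs₀m : h s₀ ≠ m := by
        intro hcon
        exact hs₀A (subset_affineSpan ℝ _ (by
          simp only [Finset.coe_filter, Set.mem_setOf_eq, hS₁]; exact ⟨hs₀S, hcon⟩))
      obtain ⟨g, γ, hgconst, hgs₀⟩ :=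
        exists_const_functional (T := (S₁ : Set (ι → ℝ))) (a := a)
          (by exact_mod_cast haS₁) hs₀A
      have hgconst' : ∀ s ∈ S, h s = m → g s = γ := by
        intro s hs hsm
        exact hgconst s (by simp only [Finset.coe_filter, Set.mem_setOf_eq, hS₁]; exact ⟨hs, hsm⟩)
      obtain ⟨t₁, s₁, ht₁, hs₁S, hs₁m, hs₁eq, hbnd₁⟩ :=
        rotate S h g m γ hb hgconst' s₀ hs₀S hs₀m (by rw [hgs₀]; linarith)
      -- bundle: a good rotation exists
      obtain ⟨g', γ', t, sn, hg'const, ht0, hsnS, hsnm, hsneq, hbnd, hnotall⟩ :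
          ∃ (g' : (ι → ℝ) →ₗ[ℝ] ℝ) (γ' t : ℝ) (sn : ι → ℝ),
            (∀ s ∈ S, h s = m → g' s = γ') ∧ 0 < t ∧ sn ∈ S ∧ h sn ≠ m ∧
            h sn + t * g' sn = m + t * γ' ∧
            (∀ s ∈ S, h s + t * g' s ≤ m + t * γ') ∧
            ¬ (∀ s ∈ S, h s + t * g' s = m + t * γ') := by
        by_cases hbad : ∀ s ∈ S, h s + t₁ * g s = m + t₁ * γ
        · -- second rotation
          have hs₀' : ∃ s₀' ∈ S, s₀' ∉ affineSpan ℝ (insert s₀ (S₁ : Set (ι → ℝ))) := by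
            by_contra hcon
            push_neg at hcon
            have hle : affineSpan ℝ (S : Set (ι → ℝ))
                ≤ affineSpan ℝ (insert s₀ (S₁ : Set (ι → ℝ))) := by
              rw [affineSpan_le]; intro s hs
              obtain ⟨s', hs', rfl⟩ : ∃ s' ∈ S, s' = s := by simpa using hs
              exact hcon s' hs'
            have h1 := Submodule.finrank_mono (AffineSubspace.direction_le hle)
            rw [direction_affineSpan, direction_affineSpan] at h1
            have h2 := finrank_vectorSpan_insert_le_set ℝ (S₁ : Set (ι → ℝ)) s₀
            omega
          obtain ⟨s₀', hs₀'S, hs₀'A⟩ := hs₀'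
          obtain ⟨g₂, γ₂, hg₂const, hg₂s₀'⟩ :=
            exists_const_functional (T := insert s₀ (S₁ : Set (ι → ℝ))) (a := a)
              (Set.mem_insert_of_mem _ (by exact_mod_cast haS₁)) hs₀'A
          have hg₂S₁ : ∀ s ∈ S, h s = m → g₂ s = γ₂ := fun s hs hsm =>
            hg₂const s (Set.mem_insert_of_mem _
              (by simp only [Finset.coe_filter, Set.mem_setOf_eq, hS₁]; exact ⟨hs, hsm⟩))
          have hg₂s₀ : g₂ s₀ = γ₂ := hg₂const s₀ (Set.mem_insert _ _)
          set g' := g + g₂ with hg'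
          set γ' := γ + γ₂ with hγ'
          have hg'const : ∀ s ∈ S, h s = m → g' s = γ' := by
            intro s hs hsm
            simp only [hg', LinearMap.add_apply, hγ']
            rw [hgconst' s hs hsm, hg₂S₁ s hs hsm]
          have hg's₀ : γ' < g' s₀ := by
            simp only [hg', LinearMap.add_apply, hγ', hgs₀, hg₂s₀]; linarith
          obtain ⟨t₂, s₂, ht₂, hs₂S, hs₂m, hs₂eq, hbnd₂⟩ :=
            rotate S h g' m γ' hb hg'const s₀ hs₀S hs₀m hg's₀
          refine ⟨g', γ', t₂, s₂, hg'const, ht₂, hs₂S, hs₂m, hs₂eq, hbnd₂, ?_⟩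
          intro hbad2
          -- derive contradiction
          have e₀₁ : h s₀ + t₁ * g s₀ = m + t₁ * γ := hbad s₀ hs₀S
          have e₀₂ : h s₀ + t₂ * g' s₀ = m + t₂ * γ' := hbad2 s₀ hs₀S
          have hgg : g' s₀ = g s₀ + γ₂ := by simp [hg', LinearMap.add_apply, hg₂s₀]
          have ht₁₂ : t₁ = t₂ := by
            rw [hgg] at e₀₂
            simp only [hγ'] at e₀₂
            have hx1 : t₁ * (g s₀ - γ) = m - h s₀ := by linarith
            have hx2 : t₂ * (g s₀ - γ) = m - h s₀ := by nlinarith [e₀₂]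
            have : g s₀ - γ ≠ 0 := by rw [hgs₀]; ring_nf; norm_num
            have := mul_right_cancel₀ this (by linarith [hx1, hx2] :
              t₁ * (g s₀ - γ) = t₂ * (g s₀ - γ))
            exact this
          have hg₂all : ∀ s ∈ S, g₂ s = γ₂ := by
            intro s hs
            have e1 : h s + t₁ * g s = m + t₁ * γ := hbad s hs
            have e2 : h s + t₂ * (g s + g₂ s) = m + t₂ * (γ + γ₂) := by
              have := hbad2 s hs
              simpa [hg', LinearMap.add_apply, hγ'] using this
            rw [← ht₁₂] at e2
            have : t₁ * g₂ s = t₁ * γ₂ := by nlinarith [e1, e2]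
            exact mul_left_cancel₀ (ne_of_gt ht₁) this
          have := hg₂all s₀' hs₀'S
          rw [hg₂s₀'] at this
          linarith
        · exact ⟨g, γ, t₁, s₁, hgconst', ht₁, hs₁S, hs₁m, hs₁eq, hbnd₁, hbad⟩
      -- recurse with the new face
      set h' := h + t • g' with hh'
      set m' := m + t * γ' with hm'
      have happ : ∀ x, h' x = h x + t * g' x := by
        intro x; simp [hh', LinearMap.add_apply, LinearMap.smul_apply, smul_eq_mul]
      have hb' : ∀ s ∈ S, h' s ≤ m' := by
        intro s hs; rw [happ, hm']; exact hbnd s hs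
      have hcard' : (S.filter fun s => h' s ≠ m').card ≤ k := by
        have hss : S.filter (fun s => h' s ≠ m') ⊂ S.filter (fun s => h s ≠ m) := by
          constructor
          · intro s hs
            rw [Finset.mem_filter] at hs ⊢
            refine ⟨hs.1, fun hcon => hs.2 ?_⟩
            rw [happ, hm', hcon, hg'const s hs.1 hcon]
          · intro hcon
            have h1 : sn ∈ S.filter (fun s => h s ≠ m) := Finset.mem_filter.2 ⟨hsnS, hsnm⟩
            have h2 := hcon h1
            rw [Finset.mem_filter] at h2
            exact h2.2 (by rw [happ, hm']; exact hsneq)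
        have := Finset.card_lt_card hss
        omega
      have hne' : ({x ∈ Q | h' x = m'}).Nonempty := by
        refine ⟨sn, subset_convexHull ℝ _ hsnS, ?_⟩
        rw [happ, hm']; exact hsneq
      have hprop' : {x ∈ Q | h' x = m'} ≠ Q := by
        intro hcon
        apply hnotall
        intro s hs
        have : s ∈ Q := subset_convexHull ℝ _ hs
        rw [← hcon] at this
        have := this.2
        rw [happ, hm'] at this
        exact this
      obtain ⟨h₃, m₃, hb₃, hfacet₃, hsub₃⟩ := IH h' m' hcard' hb' hne' hprop'
      refine ⟨h₃, m₃, hb₃, hfacet₃, ?_⟩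
      intro x hx
      apply hsub₃
      refine ⟨hx.1, ?_⟩
      have hxS₁ : x ∈ convexHull ℝ (S₁ : Set (ι → ℝ)) := by rw [← hFS₁]; exact hx
      have : ∀ s ∈ S₁, h' s = m' := by
        intro s hs
        rw [Finset.mem_filter] at hs
        rw [happ, hm', hs.2, hg'const s hs.1 hs.2]
      exact hull_subset_level this x hxS₁

-- chunk4
/-- each face of a hull is the hull of its vertex subset, canonically -/
lemma face_eq_hull_inter (S : Finset (ι → ℝ)) {F : Set (ι → ℝ)}
    (hF : IsFace (convexHull ℝ (S : Set (ι → ℝ))) F) :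
    F = convexHull ℝ ((S.filter fun s => s ∈ F : Finset (ι → ℝ)) : Set (ι → ℝ)) := by
  obtain ⟨u, w, hub, hFeq⟩ := hF
  have hb : ∀ s ∈ S, u s ≤ w := fun s hs => hub s (subset_convexHull ℝ _ hs)
  have heq : (S.filter fun s => s ∈ F) = (S.filter fun s => u s = w) := by
    apply Finset.filter_congr
    intro s hs
    rw [hFeq]
    exact ⟨fun h' => h'.2, fun h' => ⟨subset_convexHull ℝ _ hs, h'⟩⟩
  rw [heq, ← face_hull S u w hb]
  exact hFeq

lemma facets_finite (S : Finset (ι → ℝ)) :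
    Finite {F : Set (ι → ℝ) // IsFacet (convexHull ℝ (S : Set (ι → ℝ))) F} := by
  have : Function.Injective
      (fun F : {F : Set (ι → ℝ) // IsFacet (convexHull ℝ (S : Set (ι → ℝ))) F} =>
        (⟨S.filter (fun s => s ∈ F.1), Finset.mem_powerset.2 (Finset.filter_subset _ _)⟩ :
          {T : Finset (ι → ℝ) // T ∈ S.powerset})) := by
    intro F₁ F₂ hFF
    apply Subtype.ext
    rw [face_eq_hull_inter S F₁.2.1, face_eq_hull_inter S F₂.2.1]
    simp only [Subtype.mk.injEq] at hFF
    rw [hFF]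
  exact Finite.of_injective _ this

lemma facetCount_empty : facetCount (∅ : Set (ι → ℝ)) = 0 := by
  have : IsEmpty {F : Set (ι → ℝ) // IsFacet (∅ : Set (ι → ℝ)) F} := by
    constructor
    rintro ⟨F, ⟨⟨u, w, hub, hFeq⟩, hne, hdim⟩⟩
    apply hne
    rw [hFeq]
    ext x; simp
  simp [facetCount, Nat.card_of_isEmpty]

/-- L3': a face of an exposed face, presented exactly over the big polytope. -/
lemma face_of_face (S : Finset (ι → ℝ)) (ℓ : (ι → ℝ) →ₗ[ℝ] ℝ) (c : ℝ)
    (hb : ∀ s ∈ S, ℓ s ≤ c)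
    (g : (ι → ℝ) →ₗ[ℝ] ℝ) (d : ℝ)
    (hb2 : ∀ x ∈ {x ∈ convexHull ℝ (S : Set (ι → ℝ)) | ℓ x = c}, g x ≤ d) :
    ∃ (h : (ι → ℝ) →ₗ[ℝ] ℝ) (m : ℝ), (∀ s ∈ S, h s ≤ m) ∧
      (∀ s ∈ S, (h s = m ↔ (ℓ s = c ∧ g s = d))) ∧
      {x ∈ convexHull ℝ (S : Set (ι → ℝ)) | h x = m}
        = {x ∈ {x ∈ convexHull ℝ (S : Set (ι → ℝ)) | ℓ x = c} | g x = d} := by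
  set Q := convexHull ℝ (S : Set (ι → ℝ)) with hQ
  have hmemQ'' : ∀ s ∈ S, ℓ s = c → g s ≤ d := by
    intro s hs hsc
    exact hb2 s ⟨subset_convexHull ℝ _ hs, hsc⟩
  set T := S.filter (fun s => ℓ s ≠ c) with hT
  rcases Finset.eq_empty_or_nonempty T with hTe | hTne
  · -- everything on the level: h := g works
    have hall : ∀ s ∈ S, ℓ s = c := by
      intro s hs
      by_contra hne'
      have : s ∈ T := Finset.mem_filter.2 ⟨hs, hne'⟩
      rw [hTe] at this; exact absurd this (Finset.notMem_empty s)
    have hQl : ∀ x ∈ Q, ℓ x = c := hull_subset_level hall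
    refine ⟨g, d, fun s hs => hmemQ'' s hs (hall s hs),
      fun s hs => ⟨fun h' => ⟨hall s hs, h'⟩, fun h' => h'.2⟩, ?_⟩
    ext x
    constructor
    · rintro ⟨hxQ, hxg⟩; exact ⟨⟨hxQ, hQl x hxQ⟩, hxg⟩
    · rintro ⟨⟨hxQ, _⟩, hxg⟩; exact ⟨hxQ, hxg⟩
  · set N := (T.sup' hTne (fun s => (g s - d) / (c - ℓ s))) + 1 with hN
    have hNs : ∀ s ∈ T, g s - d < N * (c - ℓ s) := by
      intro s hs
      have hTs := Finset.mem_filter.1 hs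
      have hlt : ℓ s < c := lt_of_le_of_ne (hb s hTs.1) hTs.2
      have h1 : (g s - d) / (c - ℓ s) ≤ N - 1 := by
        rw [hN, add_sub_cancel_right]; exact Finset.le_sup' (fun s => (g s - d) / (c - ℓ s)) hs
      have h2 : (g s - d) ≤ (N - 1) * (c - ℓ s) := by
        have := (div_le_iff₀ (by linarith : (0:ℝ) < c - ℓ s)).1 h1
        linarith
      nlinarith
    set h := g + N • ℓ with hh
    set m := d + N * c with hm
    have happ : ∀ x, h x = g x + N * ℓ x := by
      intro x; simp [hh, LinearMap.add_apply, LinearMap.smul_apply, smul_eq_mul]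
    have hbS : ∀ s ∈ S, h s ≤ m := by
      intro s hs
      rw [happ, hm]
      by_cases hsc : ℓ s = c
      · rw [hsc]; have := hmemQ'' s hs hsc; linarith
      · have : s ∈ T := Finset.mem_filter.2 ⟨hs, hsc⟩
        have := hNs s this; linarith
    have hiff : ∀ s ∈ S, (h s = m ↔ (ℓ s = c ∧ g s = d)) := by
      intro s hs
      rw [happ, hm]
      constructor
      · intro heq
        by_cases hsc : ℓ s = c
        · exact ⟨hsc, by rw [hsc] at heq; linarith⟩
        · exfalso
          have : s ∈ T := Finset.mem_filter.2 ⟨hs, hsc⟩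
          have := hNs s this; linarith
      · rintro ⟨h1, h2⟩; rw [h1, h2]
    refine ⟨h, m, hbS, hiff, ?_⟩
    -- both sides are hulls of the same finset
    have hlhs := face_hull S h m hbS
    have hQ'' : {x ∈ Q | ℓ x = c} = convexHull ℝ ((S.filter fun s => ℓ s = c) : Set (ι → ℝ)) :=
      face_hull S ℓ c hb
    have hrhs : {x ∈ {x ∈ Q | ℓ x = c} | g x = d}
        = convexHull ℝ (((S.filter fun s => ℓ s = c).filter fun s => g s = d) :
            Set (ι → ℝ)) := by
      rw [hQ'']
      exact face_hull _ g d (fun s hs => by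
        have hs' := Finset.mem_filter.1 hs
        exact hmemQ'' s hs'.1 hs'.2)
    rw [hlhs, hrhs, Finset.filter_filter]
    have heq : (S.filter fun s => h s = m) = (S.filter fun a => ℓ a = c ∧ g a = d) := by
      apply Finset.filter_congr
      intro s hs
      simpa using hiff s hs
    rw [heq]

-- chunk5
/-- (M2): a facet has at most as many facets as the polytope. -/
lemma facet_count_facet_le (S : Finset (ι → ℝ)) (ℓ : (ι → ℝ) →ₗ[ℝ] ℝ) (c : ℝ)
    (hb : ∀ s ∈ S, ℓ s ≤ c)
    (hne : ({x ∈ convexHull ℝ (S : Set (ι → ℝ)) | ℓ x = c}).Nonempty)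
    (hprop : {x ∈ convexHull ℝ (S : Set (ι → ℝ)) | ℓ x = c} ≠ convexHull ℝ (S : Set (ι → ℝ)))
    (hdim : polyDim {x ∈ convexHull ℝ (S : Set (ι → ℝ)) | ℓ x = c} + 1
      = polyDim (convexHull ℝ (S : Set (ι → ℝ)))) :
    facetCount {x ∈ convexHull ℝ (S : Set (ι → ℝ)) | ℓ x = c}
      ≤ facetCount (convexHull ℝ (S : Set (ι → ℝ))) := by
  haveI := facets_finite S
  set Q := convexHull ℝ (S : Set (ι → ℝ)) with hQdef
  set Q'' := {x ∈ Q | ℓ x = c} with hQ''def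
  have hQ''Q : Q'' ⊆ Q := fun x hx => hx.1
  have hQ''facet : IsFacet Q Q'' := ⟨⟨ℓ, c, hull_bound hb, rfl⟩, hprop, hdim⟩
  have hex : ∀ Gp : {F : Set (ι → ℝ) // IsFacet Q'' F},
      ∃ Kp : {F : Set (ι → ℝ) // IsFacet Q F},
        (Gp.1 = ∅ → Kp.1 = Q'') ∧
        (Gp.1 ≠ ∅ → (Gp.1 ⊆ Kp.1 ∧ ∃ y ∈ Kp.1, y ∉ Q'')) := by
    rintro ⟨G, hG⟩
    by_cases hGe : G = ∅
    · exact ⟨⟨Q'', hQ''facet⟩, fun _ => rfl, fun h' => absurd hGe h'⟩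
    · obtain ⟨g, d, hgb, hGeq⟩ := hG.1
      obtain ⟨h₁, m₁, hb₁S, hiff₁, hset₁⟩ := face_of_face S ℓ c hb g d hgb
      have hGQ : G = {x ∈ Q | h₁ x = m₁} := by rw [hGeq, ← hset₁]
      have hb₁Q : ∀ x ∈ Q, h₁ x ≤ m₁ := hull_bound hb₁S
      set T := S.filter (fun s => ℓ s ≠ c) with hT
      have hTne : T.Nonempty := by
        rcases Finset.eq_empty_or_nonempty T with hTe | h'
        · exfalso
          apply hprop
          apply Set.Subset.antisymm (fun x hx => hx.1)
          intro x hx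
          refine ⟨hx, hull_subset_level (fun s hs => ?_) x hx⟩
          by_contra hc
          have : s ∈ T := Finset.mem_filter.2 ⟨hs, hc⟩
          rw [hTe] at this
          exact absurd this (Finset.notMem_empty s)
        · exact h'
      have hTlt : ∀ s ∈ T, ℓ s < c ∧ h₁ s < m₁ := by
        intro s hs
        have hs' := Finset.mem_filter.1 hs
        have h1 : ℓ s < c := lt_of_le_of_ne (hb s hs'.1) hs'.2
        have h2 : h₁ s ≠ m₁ := by
          intro hcon
          exact hs'.2 ((hiff₁ s hs'.1).1 hcon).1
        exact ⟨h1, lt_of_le_of_ne (hb₁S s hs'.1) h2⟩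
      set t := T.inf' hTne (fun s => (m₁ - h₁ s) / (c - ℓ s)) with ht
      have htpos : 0 < t := by
        rw [ht, Finset.lt_inf'_iff]
        intro s hs
        obtain ⟨h1, h2⟩ := hTlt s hs
        exact div_pos (by linarith) (by linarith)
      set f := h₁ - t • ℓ with hf
      set cf := m₁ - t * c with hcf
      have happ : ∀ x, f x = h₁ x - t * ℓ x := by
        intro x; simp [hf, LinearMap.sub_apply, LinearMap.smul_apply, smul_eq_mul]
      have hbf : ∀ s ∈ S, f s ≤ cf := by
        intro s hs
        rw [happ, hcf]
        by_cases hsc : ℓ s = c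
        · rw [hsc]
          have := hb₁S s hs; linarith
        · have hsT : s ∈ T := Finset.mem_filter.2 ⟨hs, hsc⟩
          obtain ⟨h1, h2⟩ := hTlt s hsT
          have h3 : t ≤ (m₁ - h₁ s) / (c - ℓ s) := by
            rw [ht]; exact Finset.inf'_le _ hsT
          have h4 : t * (c - ℓ s) ≤ m₁ - h₁ s := by
            have := (le_div_iff₀ (by linarith : (0:ℝ) < c - ℓ s)).1 h3
            linarith
          linarith
      obtain ⟨s₁, hs₁T, hs₁q⟩ := T.exists_mem_eq_inf' hTne (fun s => (m₁ - h₁ s) / (c - ℓ s))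
      have hs₁S : s₁ ∈ S := (Finset.mem_filter.1 hs₁T).1
      have hs₁l : ℓ s₁ ≠ c := (Finset.mem_filter.1 hs₁T).2
      have hs₁eq : f s₁ = cf := by
        obtain ⟨h1, h2⟩ := hTlt s₁ hs₁T
        have hne0 : c - ℓ s₁ ≠ 0 := by linarith
        have : t * (c - ℓ s₁) = m₁ - h₁ s₁ := by
          rw [ht, hs₁q]; field_simp
        rw [happ, hcf]; nlinarith [this]
      set Fstar := {x ∈ Q | f x = cf} with hFstar
      have hGsub : G ⊆ Fstar := by
        rw [hGQ, face_hull S h₁ m₁ hb₁S]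
        intro x hx
        refine ⟨convexHull_mono (by exact_mod_cast Finset.filter_subset _ _) hx, ?_⟩
        refine hull_subset_level (fun s hs => ?_) x hx
        have hs' := Finset.mem_filter.1 hs
        obtain ⟨hl, hg⟩ := (hiff₁ s hs'.1).1 hs'.2
        rw [happ, hcf, hs'.2, hl]
      have hGne : G.Nonempty := Set.nonempty_iff_ne_empty.2 hGe
      have hFne : Fstar.Nonempty := hGne.mono hGsub
      have hFprop : Fstar ≠ Q := by
        have hexs : ∃ s ∈ S, ℓ s = c ∧ h₁ s ≠ m₁ := by
          by_contra hcon
          push_neg at hcon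
          apply hG.2.1
          rw [hGQ, face_hull S h₁ m₁ hb₁S, hQ''def, face_hull S ℓ c hb]
          have : S.filter (fun s => h₁ s = m₁) = S.filter (fun s => ℓ s = c) := by
            apply Finset.filter_congr
            intro s hs
            exact ⟨fun h' => ((hiff₁ s hs).1 h').1, fun h' => hcon s hs h'⟩
          rw [this]
        obtain ⟨s, hsS, hsl, hsh⟩ := hexs
        intro hcon
        have hsQ : s ∈ Q := subset_convexHull ℝ _ hsS
        have : s ∈ Fstar := by rw [hcon]; exact hsQ
        have hfs : f s = cf := this.2
        rw [happ, hcf, hsl] at hfs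
        have : h₁ s = m₁ := by linarith
        exact hsh this
      obtain ⟨h₃, m₃, hb₃, hfac₃, hsub₃⟩ :=
        exists_facet_above S (S.filter fun s => f s ≠ cf).card f cf (le_refl _) hbf hFne hFprop
      refine ⟨⟨{x ∈ Q | h₃ x = m₃}, hfac₃⟩, fun h' => absurd h' hGe, fun _ => ?_⟩
      constructor
      · exact fun x hx => hsub₃ (hGsub hx)
      · refine ⟨s₁, hsub₃ ⟨subset_convexHull ℝ _ hs₁S, hs₁eq⟩, ?_⟩
        intro hcon
        exact hs₁l hcon.2
  choose φ hφ1 hφ2 using hex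
  have hinj : Function.Injective φ := by
    intro G₁ G₂ heq
    by_cases h1 : G₁.1 = ∅ <;> by_cases h2 : G₂.1 = ∅
    · exact Subtype.ext (h1.trans h2.symm)
    · exfalso
      obtain ⟨_, y, hyK, hyQ⟩ := hφ2 G₂ h2
      rw [← heq] at hyK
      rw [hφ1 G₁ h1] at hyK
      exact hyQ hyK
    · exfalso
      obtain ⟨_, y, hyK, hyQ⟩ := hφ2 G₁ h1
      rw [heq] at hyK
      rw [hφ1 G₂ h2] at hyK
      exact hyQ hyK
    · -- both nonempty
      obtain ⟨hsub₁, y, hyK, hyQ⟩ := hφ2 G₁ h1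
      obtain ⟨hsub₂, _⟩ := hφ2 G₂ h2
      obtain ⟨⟨u, w, hub, hKeq⟩, hKne, hKdim⟩ := (φ G₁).2
      rw [hKeq] at hyK hKne hKdim
      have hsub₁' : G₁.1 ⊆ {x ∈ Q | u x = w} := by rw [← hKeq]; exact hsub₁
      have hsub₂' : G₂.1 ⊆ {x ∈ Q | u x = w} := by
        rw [← hKeq, heq]; exact hsub₂
      have hKQ : {x ∈ Q | u x = w} ⊆ Q := fun x hx => hx.1
      have hQ''notK : ¬ (Q'' ⊆ {x ∈ Q | u x = w}) := by
        intro hQK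
        have hQKeq : {x ∈ {x ∈ Q | u x = w} | ℓ x = c} = Q'' := by
          apply Set.Subset.antisymm
          · rintro x ⟨hxK, hxl⟩
            exact ⟨hKQ hxK, hxl⟩
          · intro x hx
            exact ⟨hQK hx, hx.2⟩
        have hKdimle : polyDim {x ∈ Q | u x = w}
            ≤ polyDim {x ∈ {x ∈ Q | u x = w} | ℓ x = c} := by
          rw [hQKeq]; omega
        have := face_eq_of_dim_le (fun x hx => hull_bound hb x (hKQ hx))
          (by rw [hQKeq]; exact hne) hKdimle
        rw [hQKeq] at this
        rw [← this] at hyK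
        exact hyQ hyK
      -- the common face X
      have hubQ'' : ∀ x ∈ Q'', u x ≤ w := fun x hx => hub x (hQ''Q hx)
      have hG₁Q'' : G₁.1 ⊆ Q'' := by
        obtain ⟨g₁, d₁, hgb₁, hG₁eq⟩ := G₁.2.1
        rw [hG₁eq]; exact fun x hx => hx.1
      have hG₂Q'' : G₂.1 ⊆ Q'' := by
        obtain ⟨g₂, d₂, hgb₂, hG₂eq⟩ := G₂.2.1
        rw [hG₂eq]; exact fun x hx => hx.1
      have hG₁X : G₁.1 ⊆ {x ∈ Q'' | u x = w} := by
        intro x hx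
        exact ⟨hG₁Q'' hx, (hsub₁' hx).2⟩
      have hG₂X : G₂.1 ⊆ {x ∈ Q'' | u x = w} := by
        intro x hx
        exact ⟨hG₂Q'' hx, (hsub₂' hx).2⟩
      have hXprop : {x ∈ Q'' | u x = w} ≠ Q'' := by
        intro hcon
        apply hQ''notK
        intro x hx
        have hxX : x ∈ {x ∈ Q'' | u x = w} := by rw [hcon]; exact hx
        exact ⟨hQ''Q hx, hxX.2⟩
      have hG₁ne : G₁.1.Nonempty := Set.nonempty_iff_ne_empty.2 h1
      have hG₂ne : G₂.1.Nonempty := Set.nonempty_iff_ne_empty.2 h2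
      have hXdim : polyDim {x ∈ Q'' | u x = w} < polyDim Q'' :=
        dim_lt_of_face_ne hubQ'' ⟨_, hG₁X hG₁ne.some_mem⟩ hXprop
      -- any nonempty facet of Q'' inside X equals X
      have hfaceeq : ∀ (G' : Set (ι → ℝ)), IsFacet Q'' G' →
          G'.Nonempty → G' ⊆ {x ∈ Q'' | u x = w} → G' = {x ∈ Q'' | u x = w} := by
        intro G' hG' hG'ne hG'X
        obtain ⟨g', d', hgb', hG'eq⟩ := hG'.1
        have hset : {x ∈ {x ∈ Q'' | u x = w} | g' x = d'} = G' := by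
          apply Set.Subset.antisymm
          · rintro x ⟨hxX, hxg⟩
            rw [hG'eq]
            exact ⟨hxX.1, hxg⟩
          · intro x hx
            refine ⟨hG'X hx, ?_⟩
            rw [hG'eq] at hx
            exact hx.2
        have hdims : polyDim {x ∈ Q'' | u x = w}
            ≤ polyDim {x ∈ {x ∈ Q'' | u x = w} | g' x = d'} := by
          rw [hset]
          have h3 := hG'.2.2
          omega
        have := face_eq_of_dim_le (fun x hx => hgb' x hx.1)
          (by rw [hset]; exact hG'ne) hdims
        rw [hset] at this
        exact this
      have e1 : G₁.1 = {x ∈ Q'' | u x = w} := hfaceeq G₁.1 G₁.2 hG₁ne hG₁X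
      have e2 : G₂.1 = {x ∈ Q'' | u x = w} := hfaceeq G₂.1 G₂.2 hG₂ne hG₂X
      exact Subtype.ext (e1.trans e2.symm)
  exact Nat.card_le_card_of_injective φ hinj

-- chunk6
/-- (M): an exposed face of a polytope has at most as many facets. -/
lemma facet_count_face_le_aux :
    ∀ (n : ℕ) (S : Finset (ι → ℝ)) (ℓ : (ι → ℝ) →ₗ[ℝ] ℝ) (c : ℝ),
      polyDim (convexHull ℝ (S : Set (ι → ℝ))) ≤ n →
      (∀ s ∈ S, ℓ s ≤ c) →
      facetCount {x ∈ convexHull ℝ (S : Set (ι → ℝ)) | ℓ x = c}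
        ≤ facetCount (convexHull ℝ (S : Set (ι → ℝ))) := by
  intro n
  induction n with
  | zero =>
      intro S ℓ c hn hb
      by_cases h1 : {x ∈ convexHull ℝ (S : Set (ι → ℝ)) | ℓ x = c}
          = convexHull ℝ (S : Set (ι → ℝ))
      · rw [h1]
      by_cases h2 : {x ∈ convexHull ℝ (S : Set (ι → ℝ)) | ℓ x = c} = (∅ : Set (ι → ℝ))
      · rw [h2, facetCount_empty]; exact Nat.zero_le _
      obtain ⟨h', m', hb', hfac, hsub⟩ := exists_facet_above S S.card ℓ c
        (Finset.card_filter_le _ _) hb (Set.nonempty_iff_ne_empty.2 h2) h1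
      have := hfac.2.2
      omega
  | succ n IH =>
      intro S ℓ c hn hb
      by_cases h1 : {x ∈ convexHull ℝ (S : Set (ι → ℝ)) | ℓ x = c}
          = convexHull ℝ (S : Set (ι → ℝ))
      · rw [h1]
      by_cases h2 : {x ∈ convexHull ℝ (S : Set (ι → ℝ)) | ℓ x = c} = (∅ : Set (ι → ℝ))
      · rw [h2, facetCount_empty]; exact Nat.zero_le _
      have hQne : ({x ∈ convexHull ℝ (S : Set (ι → ℝ)) | ℓ x = c}).Nonempty :=
        Set.nonempty_iff_ne_empty.2 h2
      obtain ⟨h', m', hb', hfac, hsub⟩ := exists_facet_above S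
        (S.filter fun s => ℓ s ≠ c).card ℓ c (le_refl _) hb hQne h1
      set Q := convexHull ℝ (S : Set (ι → ℝ)) with hQdef
      set Q'' := {x ∈ Q | h' x = m'} with hQ''def
      set S'' := S.filter (fun s => h' s = m') with hS''def
      have hQ''hull : Q'' = convexHull ℝ (S'' : Set (ι → ℝ)) := face_hull S h' m' hb'
      have hbS'' : ∀ s ∈ S'', ℓ s ≤ c := fun s hs => hb s (Finset.mem_of_mem_filter s hs)
      have hQ'eq : {x ∈ convexHull ℝ (S'' : Set (ι → ℝ)) | ℓ x = c}
          = {x ∈ Q | ℓ x = c} := by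
        rw [← hQ''hull]
        apply Set.Subset.antisymm
        · rintro x ⟨hxQ'', hxl⟩
          exact ⟨hxQ''.1, hxl⟩
        · intro x hx
          exact ⟨hsub hx, hx.2⟩
      have hdim'' : polyDim (convexHull ℝ (S'' : Set (ι → ℝ))) ≤ n := by
        rw [← hQ''hull]
        have := hfac.2.2
        omega
      have step1 := IH S'' ℓ c hdim'' hbS''
      rw [hQ'eq, ← hQ''hull] at step1
      have step2 : facetCount Q'' ≤ facetCount Q :=
        facet_count_facet_le S h' m' hb' (hQne.mono hsub) hfac.2.1 hfac.2.2
      exact le_trans step1 step2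

/-- application form: face of any polytope -/
lemma facetCount_face_le {P : Set (ι → ℝ)} (hP : IsPolytope P)
    (ℓ : (ι → ℝ) →ₗ[ℝ] ℝ) (c : ℝ) (hb : ∀ x ∈ P, ℓ x ≤ c) :
    facetCount {x ∈ P | ℓ x = c} ≤ facetCount P := by
  obtain ⟨S, rfl⟩ := hP
  exact facet_count_face_le_aux (polyDim (convexHull ℝ (S : Set (ι → ℝ)))) S ℓ c
    (le_refl _) (fun s hs => hb s (subset_convexHull ℝ _ hs))

-- chunk7
end Geom

section XC

variable {ι κ : Type*} [Fintype ι] [Fintype κ]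

lemma lin_image_convexHull {α β : Type*} (L : (α → ℝ) →ₗ[ℝ] (β → ℝ)) (s : Set (α → ℝ)) :
    ⇑L '' (convexHull ℝ s) = convexHull ℝ (⇑L '' s) := by
  have := L.toAffineMap.image_convexHull s
  simpa using this

lemma exists_self_extension (P : Set (ι → ℝ)) (hP : IsPolytope P) :
    ∃ (p : ℕ) (Q : Set (Fin p → ℝ)), IsExtensionOf Q P := by
  obtain ⟨S, rfl⟩ := hP
  set e := Fintype.equivFin ι with he
  refine ⟨Fintype.card ι,
    (LinearMap.funLeft ℝ ℝ e.symm) '' (convexHull ℝ (S : Set (ι → ℝ))), ?_, ?_⟩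
  · refine ⟨S.image (LinearMap.funLeft ℝ ℝ e.symm), ?_⟩
    rw [Finset.coe_image, ← lin_image_convexHull]
  · refine ⟨(LinearMap.funLeft ℝ ℝ (⇑e)).toAffineMap, ?_⟩
    rw [← Set.image_comp]
    have : (⇑(LinearMap.funLeft ℝ ℝ (⇑e)).toAffineMap) ∘ ⇑(LinearMap.funLeft ℝ ℝ ⇑e.symm)
        = id := by
      funext x
      simp only [Function.comp_apply, LinearMap.coe_toAffineMap, id_eq]
      funext i
      rw [LinearMap.funLeft_apply, LinearMap.funLeft_apply, Equiv.symm_apply_apply]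
    rw [this, Set.image_id]

/-- gluing: if R is a linear image of an exposed face of the polytope P,
then `xc R ≤ xc P`. -/
lemma xc_le_of_face_proj (P : Set (ι → ℝ)) (R : Set (κ → ℝ)) (hP : IsPolytope P)
    (f : (ι → ℝ) →ₗ[ℝ] ℝ) (hf : ∀ x ∈ P, f x ≤ 0)
    (π : (ι → ℝ) →ₗ[ℝ] (κ → ℝ)) (hπ : π '' {x ∈ P | f x = 0} = R) :
    xc R ≤ xc P := by
  have hPset : {m | ∃ (p : ℕ) (Q : Set (Fin p → ℝ)), IsExtensionOf Q P ∧ facetCount Q = m}.Nonempty := by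
    obtain ⟨p, Q, hQ⟩ := exists_self_extension P hP
    exact ⟨facetCount Q, p, Q, hQ, rfl⟩
  have hmem := Nat.sInf_mem hPset
  obtain ⟨p, Q, ⟨hQpoly, ρ, hρ⟩, hQcount⟩ := hmem
  set ℓ := f.comp ρ.linear with hℓ
  set c : ℝ := - f (ρ 0) with hc
  have hdecomp : ∀ x, f (ρ x) = ℓ x + f (ρ 0) := by
    intro x
    have := AffineMap.decomp ρ
    have hx : ρ x = ρ.linear x + ρ 0 := by
      conv_lhs => rw [this]
      rfl
    rw [hx, map_add, hℓ]
    rfl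
  have hbQ : ∀ x ∈ Q, ℓ x ≤ c := by
    intro x hx
    have hmem : ρ x ∈ P := by rw [← hρ]; exact ⟨x, hx, rfl⟩
    have := hf (ρ x) hmem
    rw [hdecomp x] at this
    rw [hc]; linarith
  set Q' := {x ∈ Q | ℓ x = c} with hQ'
  have hρQ' : ρ '' Q' = {x ∈ P | f x = 0} := by
    apply Set.Subset.antisymm
    · rintro y ⟨x, ⟨hxQ, hxl⟩, rfl⟩
      refine ⟨by rw [← hρ]; exact ⟨x, hxQ, rfl⟩, ?_⟩
      rw [hdecomp x, hxl, hc]; ring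
    · rintro y ⟨hyP, hyf⟩
      rw [← hρ] at hyP
      obtain ⟨x, hxQ, rfl⟩ := hyP
      refine ⟨x, ⟨hxQ, ?_⟩, rfl⟩
      rw [hdecomp x] at hyf
      rw [hc]; linarith
  have hext : IsExtensionOf Q' R := by
    constructor
    · obtain ⟨SQ, hSQ⟩ := hQpoly
      refine ⟨SQ.filter (fun s => ℓ s = c), ?_⟩
      rw [hQ', hSQ]
      exact face_hull SQ ℓ c (fun s hs => by
        rw [hSQ] at hbQ
        exact hbQ s (subset_convexHull ℝ _ hs))
    · refine ⟨π.toAffineMap.comp ρ, ?_⟩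
      rw [AffineMap.coe_comp, Set.image_comp]
      rw [hρQ']
      simpa using hπ
  have hcount : facetCount Q' ≤ facetCount Q :=
    facetCount_face_le hQpoly ℓ c hbQ
  have h1 : xc R ≤ facetCount Q' := Nat.sInf_le ⟨p, Q', hext, rfl⟩
  calc xc R ≤ facetCount Q' := h1
    _ ≤ facetCount Q := hcount
    _ = xc P := hQcount

end XC
-- ====================== correlation polytope ======================

section COR

variable {V W : Type} [Fintype V] [Fintype W]

/-- the 0/1 vertex of the correlation polytope attached to `X ⊆ V` -/
def corVertex (G : SimpleGraph V) (X : Set V) : (V ⊕ ↥G.edgeSet) → ℝ :=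
  Sum.elim (fun v => if v ∈ X then 1 else 0)
    (fun e => if ∀ v ∈ (e : Sym2 V), v ∈ X then 1 else 0)

lemma sym2_forall_mem {α : Type*} (a b : α) (P : α → Prop) :
    (∀ v ∈ s(a, b), P v) ↔ P a ∧ P b := by
  constructor
  · intro h'
    exact ⟨h' a (by simp), h' b (by simp)⟩
  · rintro ⟨h1, h2⟩ v hv
    rcases Sym2.mem_iff.1 hv with rfl | rfl <;> assumption

lemma sym2_decomp {α : Type*} (z : Sym2 α) : ∃ a b, z = s(a, b) := by
  induction z using Sym2.ind with
  | _ a b => exact ⟨a, b, rfl⟩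

lemma corPolytope_eq (G : SimpleGraph V) :
    corPolytope G = convexHull ℝ (Set.range (corVertex G)) := by
  unfold corPolytope
  congr 1
  ext x
  constructor
  · rintro ⟨X, h1, h2⟩
    refine ⟨X, ?_⟩
    funext i
    cases i with
    | inl v => rw [h1 v]; by_cases hv : v ∈ X <;> simp [corVertex, hv]
    | inr e => rw [h2 e]; by_cases hv : ∀ v ∈ (e : Sym2 V), v ∈ X <;> simp [corVertex, hv]
  · rintro ⟨X, rfl⟩
    refine ⟨X, fun v => ?_, fun e => ?_⟩
    · by_cases hv : v ∈ X <;> simp [corVertex, hv]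
    · by_cases hv : ∀ v ∈ (e : Sym2 V), v ∈ X <;> simp [corVertex, hv]

lemma corPolytope_isPolytope (G : SimpleGraph V) [Fintype ↥G.edgeSet] :
    IsPolytope (corPolytope G) :=
  ⟨(Set.finite_range (corVertex G)).toFinset, by
    rw [corPolytope_eq, Set.Finite.coe_toFinset]⟩

/-- the heart of the construction: for a minor, the correlation polytope of `H` is a
linear image of an exposed face of the correlation polytope of `G`. -/
lemma cor_minor_face_proj (H : SimpleGraph W) (G : SimpleGraph V)
    [Fintype ↥G.edgeSet] [Fintype ↥H.edgeSet]
    (hm : H.IsMinorOf G) :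
    ∃ (f : ((V ⊕ ↥G.edgeSet) → ℝ) →ₗ[ℝ] ℝ)
      (π : ((V ⊕ ↥G.edgeSet) → ℝ) →ₗ[ℝ] ((W ⊕ ↥H.edgeSet) → ℝ)),
      (∀ x ∈ corPolytope G, f x ≤ 0) ∧
      π '' {x ∈ corPolytope G | f x = 0} = corPolytope H := by
  obtain ⟨B, hconn, hdisj, hadj⟩ := hm
  -- representatives of branch sets
  have hrex : ∀ w, ∃ v, v ∈ B w := by
    intro w
    obtain ⟨⟨v, hv⟩⟩ := (hconn w).nonempty
    exact ⟨v, hv⟩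
  choose r hr using hrex
  -- choice of connecting edges
  have hgex : ∀ e : ↥H.edgeSet, ∃ e' : ↥G.edgeSet,
      ∀ w w', (e : Sym2 W) = s(w, w') →
        ∃ u v, (e' : Sym2 V) = s(u, v) ∧ u ∈ B w ∧ v ∈ B w' := by
    rintro ⟨e, he⟩
    induction e using Sym2.ind with
    | _ w₀ w₁ =>
      have hadj' : H.Adj w₀ w₁ := (SimpleGraph.mem_edgeSet H).1 he
      obtain ⟨u₀, hu₀, v₀, hv₀, huv⟩ := hadj hadj'
      refine ⟨⟨s(u₀, v₀), (SimpleGraph.mem_edgeSet G).2 huv⟩, ?_⟩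
      intro w w' hww
      rcases Sym2.eq_iff.1 hww with ⟨rfl, rfl⟩ | ⟨rfl, rfl⟩
      · exact ⟨u₀, v₀, rfl, hu₀, hv₀⟩
      · exact ⟨v₀, u₀, Sym2.eq_swap, hv₀, hu₀⟩
  choose ge hge using hgex
  -- the face functional
  set intl : ↥G.edgeSet → Prop := fun e => ∃ w, ∀ v ∈ (e : Sym2 V), v ∈ B w with hintl
  set pairFun : Sym2 V → (((V ⊕ ↥G.edgeSet) → ℝ) →ₗ[ℝ] ℝ) :=
    Sym2.lift ⟨fun a b => LinearMap.proj (Sum.inl a) + LinearMap.proj (Sum.inl b),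
      fun a b => add_comm _ _⟩ with hpairFun
  set f : ((V ⊕ ↥G.edgeSet) → ℝ) →ₗ[ℝ] ℝ :=
    ∑ e ∈ Finset.univ.filter intl,
      ((2:ℝ) • LinearMap.proj (Sum.inr e) - pairFun (e : Sym2 V)) with hfdef
  have fapp : ∀ x, f x = ∑ e ∈ Finset.univ.filter intl,
      (((2:ℝ) • LinearMap.proj (Sum.inr e) - pairFun (e : Sym2 V) :
        ((V ⊕ ↥G.edgeSet) → ℝ) →ₗ[ℝ] ℝ) x) := by
    intro x
    rw [hfdef, LinearMap.coe_sum, Finset.sum_apply]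
  have termval : ∀ (e : ↥G.edgeSet) (a b : V), (e : Sym2 V) = s(a, b) → ∀ X : Set V,
      ((2:ℝ) • LinearMap.proj (Sum.inr e) - pairFun (e : Sym2 V) :
        ((V ⊕ ↥G.edgeSet) → ℝ) →ₗ[ℝ] ℝ) (corVertex G X)
        = 2 * (if a ∈ X ∧ b ∈ X then 1 else 0)
          - ((if a ∈ X then 1 else 0) + (if b ∈ X then 1 else 0)) := by
    intro e a b he X
    rw [LinearMap.sub_apply, LinearMap.smul_apply, LinearMap.proj_apply, he, hpairFun,
      Sym2.lift_mk]
    simp only [LinearMap.add_apply, LinearMap.proj_apply, smul_eq_mul]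
    have h1 : corVertex G X (Sum.inr e) = (if a ∈ X ∧ b ∈ X then (1:ℝ) else 0) := by
      show (if ∀ v ∈ (e : Sym2 V), v ∈ X then (1:ℝ) else 0) = _
      rw [he]
      exact if_congr (sym2_forall_mem a b (· ∈ X)) rfl rfl
    rw [h1]
    rfl
  have term_nonpos : ∀ (a b : V) (X : Set V),
      (2:ℝ) * (if a ∈ X ∧ b ∈ X then 1 else 0)
        - ((if a ∈ X then 1 else 0) + (if b ∈ X then 1 else 0)) ≤ 0 := by
    intro a b X
    by_cases ha : a ∈ X <;> by_cases hb : b ∈ X <;> simp [ha, hb] <;> norm_num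
  have term_zero_iff : ∀ (a b : V) (X : Set V),
      ((2:ℝ) * (if a ∈ X ∧ b ∈ X then 1 else 0)
        - ((if a ∈ X then 1 else 0) + (if b ∈ X then 1 else 0)) = 0)
        ↔ (a ∈ X ↔ b ∈ X) := by
    intro a b X
    by_cases ha : a ∈ X <;> by_cases hb : b ∈ X <;> simp [ha, hb] <;> norm_num
  have fval_nonpos : ∀ X : Set V, f (corVertex G X) ≤ 0 := by
    intro X
    rw [fapp]
    apply Finset.sum_nonpos
    intro e he
    obtain ⟨a, b, hab⟩ := sym2_decomp (e : Sym2 V)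
    rw [termval e a b hab X]
    exact term_nonpos a b X
  have f_zero_of_BR : ∀ X : Set V, (∀ w, B w ⊆ X ∨ Disjoint (B w) X) →
      f (corVertex G X) = 0 := by
    intro X hBR
    rw [fapp]
    apply Finset.sum_eq_zero
    intro e he
    obtain ⟨w, hw⟩ := (Finset.mem_filter.1 he).2
    obtain ⟨a, b, hab⟩ := sym2_decomp (e : Sym2 V)
    rw [termval e a b hab X, term_zero_iff a b X]
    rw [hab] at hw
    have haB : a ∈ B w := hw a (by simp)
    have hbB : b ∈ B w := hw b (by simp)
    rcases hBR w with hsub | hdis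
    · simp [hsub haB, hsub hbB]
    · simp [Set.disjoint_left.1 hdis haB, Set.disjoint_left.1 hdis hbB]
  have agree_of_fzero : ∀ X : Set V, f (corVertex G X) = 0 →
      ∀ (w : W) (a b : V), a ∈ B w → b ∈ B w → G.Adj a b → (a ∈ X ↔ b ∈ X) := by
    intro X h0 w a b haB hbB hGab
    rw [fapp] at h0
    have hterm := (Finset.sum_eq_zero_iff_of_nonpos (fun e he => by
      obtain ⟨a', b', hab'⟩ := sym2_decomp (e : Sym2 V)
      rw [termval e a' b' hab' X]
      exact term_nonpos a' b' X)).1 h0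
    set ee : ↥G.edgeSet := ⟨s(a, b), (SimpleGraph.mem_edgeSet G).2 hGab⟩ with hee
    have heemem : ee ∈ Finset.univ.filter intl := by
      rw [Finset.mem_filter]
      refine ⟨Finset.mem_univ _, ⟨w, ?_⟩⟩
      show ∀ v ∈ (ee : Sym2 V), v ∈ B w
      rw [hee]
      exact (sym2_forall_mem a b (· ∈ B w)).2 ⟨haB, hbB⟩
    have := hterm ee heemem
    rw [termval ee a b rfl X] at this
    exact (term_zero_iff a b X).1 this
  have BR_of_fzero : ∀ X : Set V, f (corVertex G X) = 0 →
      ∀ w, B w ⊆ X ∨ Disjoint (B w) X := by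
    intro X h0 w
    have key : ∀ a b : ↥(B w), ((a : V) ∈ X ↔ (b : V) ∈ X) := by
      intro a b
      obtain ⟨p⟩ := (hconn w).preconnected a b
      induction p with
      | nil => exact Iff.rfl
      | cons h' p' ih =>
        rename_i x y z
        have hGxy : G.Adj ↑x ↑y := by simpa using h'
        exact (agree_of_fzero X h0 w ↑x ↑y x.2 y.2 hGxy).trans ih
    by_cases hex2 : ∃ a, a ∈ B w ∧ a ∈ X
    · obtain ⟨a, haB, haX⟩ := hex2
      left
      intro b hbB
      exact (key ⟨b, hbB⟩ ⟨a, haB⟩).2 haX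
    · right
      rw [Set.disjoint_left]
      intro a haB haX
      exact hex2 ⟨a, haB, haX⟩
  -- the projection
  set π : ((V ⊕ ↥G.edgeSet) → ℝ) →ₗ[ℝ] ((W ⊕ ↥H.edgeSet) → ℝ) :=
    LinearMap.funLeft ℝ ℝ
      (Sum.elim (fun w => Sum.inl (r w)) (fun e => Sum.inr (ge e))) with hπdef
  have proj_vertex : ∀ X : Set V, (∀ w, B w ⊆ X ∨ Disjoint (B w) X) →
      π (corVertex G X) = corVertex H {w | r w ∈ X} := by
    intro X hBR
    have hmemiff : ∀ (w' : W) (z : V), z ∈ B w' → (z ∈ X ↔ r w' ∈ X) := by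
      intro w' z hz
      rcases hBR w' with hsub | hdis
      · simp [hsub hz, hsub (hr w')]
      · simp [Set.disjoint_left.1 hdis hz, Set.disjoint_left.1 hdis (hr w')]
    funext j
    rw [hπdef, LinearMap.funLeft_apply]
    cases j with
    | inl w => simp [corVertex, Set.mem_setOf_eq]
    | inr e =>
      obtain ⟨w₀, w₁, hww⟩ := sym2_decomp (e : Sym2 W)
      obtain ⟨u, v, huv, huB, hvB⟩ := hge e w₀ w₁ hww
      show (if ∀ z ∈ ((ge e : ↥G.edgeSet) : Sym2 V), z ∈ X then (1:ℝ) else 0)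
        = (if ∀ z ∈ (e : Sym2 W), z ∈ {w | r w ∈ X} then (1:ℝ) else 0)
      have hiff : (∀ z ∈ ((ge e : ↥G.edgeSet) : Sym2 V), z ∈ X)
          ↔ (∀ z ∈ (e : Sym2 W), z ∈ {w | r w ∈ X}) := by
        rw [huv, hww, sym2_forall_mem u v (· ∈ X),
          sym2_forall_mem w₀ w₁ (· ∈ {w | r w ∈ X})]
        simp only [Set.mem_setOf_eq]
        rw [hmemiff w₀ u huB, hmemiff w₁ v hvB]
      exact if_congr hiff rfl rfl
  have hBRU : ∀ X' : Set W, ∀ w, B w ⊆ (⋃ w' ∈ X', B w') ∨ Disjoint (B w) (⋃ w' ∈ X', B w') := by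
    intro X' w
    by_cases hw : w ∈ X'
    · left; exact Set.subset_biUnion_of_mem hw
    · right
      rw [Set.disjoint_left]
      intro a haB haU
      rw [Set.mem_iUnion₂] at haU
      obtain ⟨w', hw', haB'⟩ := haU
      have hne : w ≠ w' := fun hh => hw (hh ▸ hw')
      exact Set.disjoint_left.1 (hdisj hne) haB haB'
  have proj_union : ∀ X' : Set W,
      π (corVertex G (⋃ w ∈ X', B w)) = corVertex H X' := by
    intro X'
    have hset : {w | r w ∈ ⋃ w' ∈ X', B w'} = X' := by
      ext w
      simp only [Set.mem_setOf_eq, Set.mem_iUnion₂]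
      constructor
      · rintro ⟨w', hw', hrB⟩
        by_cases hww : w = w'
        · exact hww ▸ hw'
        · exact absurd hrB (Set.disjoint_left.1 (hdisj hww) (hr w))
      · intro hw
        exact ⟨w, hw, hr w⟩
    rw [proj_vertex _ (hBRU X'), hset]
  -- assemble
  set SG := (Set.finite_range (corVertex G)).toFinset with hSGdef
  have hSG : (SG : Set ((V ⊕ ↥G.edgeSet) → ℝ)) = Set.range (corVertex G) :=
    Set.Finite.coe_toFinset _
  have hcorG : corPolytope G = convexHull ℝ (SG : Set ((V ⊕ ↥G.edgeSet) → ℝ)) := by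
    rw [corPolytope_eq, hSG]
  have hbS : ∀ s ∈ SG, f s ≤ 0 := by
    intro s hs
    have : s ∈ Set.range (corVertex G) := by rw [← hSG]; exact_mod_cast hs
    obtain ⟨X, rfl⟩ := this
    exact fval_nonpos X
  have hbound : ∀ x ∈ corPolytope G, f x ≤ 0 := by
    rw [hcorG]
    exact hull_bound hbS
  have hface : {x ∈ corPolytope G | f x = 0}
      = convexHull ℝ ((SG.filter fun s => f s = 0) : Set ((V ⊕ ↥G.edgeSet) → ℝ)) := by
    rw [hcorG]
    exact face_hull SG f 0 hbS
  have himg : ⇑π '' ((SG.filter fun s => f s = 0) : Set ((V ⊕ ↥G.edgeSet) → ℝ))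
      = Set.range (corVertex H) := by
    apply Set.Subset.antisymm
    · rintro y ⟨x, hx, rfl⟩
      rw [Finset.mem_coe, Finset.mem_filter] at hx
      obtain ⟨hxSG, hxf⟩ := hx
      have : x ∈ Set.range (corVertex G) := by rw [← hSG]; exact_mod_cast hxSG
      obtain ⟨X, rfl⟩ := this
      rw [proj_vertex X (BR_of_fzero X hxf)]
      exact ⟨_, rfl⟩
    · rintro y ⟨X', rfl⟩
      refine ⟨corVertex G (⋃ w ∈ X', B w), ?_, proj_union X'⟩
      rw [Finset.mem_coe, Finset.mem_filter]
      refine ⟨?_, f_zero_of_BR _ (hBRU X')⟩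
      rw [hSGdef, Set.Finite.mem_toFinset]
      exact ⟨_, rfl⟩
  refine ⟨f, π, hbound, ?_⟩
  rw [hface, lin_image_convexHull, himg, ← corPolytope_eq]

end COR

/-- **Observation (minor monotonicity).** If `H` is a minor of `G`, then
`xc(COR(H)) ≤ xc(COR(G))`. -/
theorem xc_corPolytope_minor_monotone {W V : Type} [Fintype W] [Fintype V]
    (H : SimpleGraph W) (G : SimpleGraph V) (h : H.IsMinorOf G) :
    xc (corPolytope H) ≤ xc (corPolytope G) := by
  classical
  haveI : Fintype ↥G.edgeSet := Fintype.ofFinite _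
  haveI : Fintype ↥H.edgeSet := Fintype.ofFinite _
  obtain ⟨f, π, h1, h2⟩ := cor_minor_face_proj H G h
  exact xc_le_of_face_proj _ _ (corPolytope_isPolytope G) f h1 π h2

end
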